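/- Let Y_1, …, Y_{n+1} be exchangeable real random variables. Then P(Y_{n+1} > max_{1≤i≤n} Y_i) ≤ 1/(n+1) and P(Y_{n+1} < min_{1≤i≤n} Y_i) ≤ 1/(n+1); consequently P(Y_{n+1} ∈ [Y_{(1)}, Y_{(n)}]) ≥ 1 − 2/(n+1), where Y_{(1)} = min_{1≤i≤n} Y_i and Y_{(n)} = max_{1≤i≤n} Y_i are the smallest and largest of the first n values. -/

import Mathlib

open scoped BigOperators ENNReal

noncomputable section

open MeasureTheory

lemma aux_strict {Ω : Type*} [MeasurableSpace Ω] (μ : Measure Ω)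
    [IsProbabilityMeasure μ] {n : ℕ} (Y : Fin (n + 1) → Ω → ℝ)
    (hmeas : ∀ i, Measurable (Y i))
    (hexch : ∀ σ : Equiv.Perm (Fin (n + 1)),
      Measure.map (fun ω => fun i => Y (σ i) ω) μ = Measure.map (fun ω => fun i => Y i ω) μ)
    (r : ℝ → ℝ → Prop) (hasym : ∀ a b, r a b → ¬ r b a)
    (hmr : MeasurableSet {p : ℝ × ℝ | r p.1 p.2}) :
    μ {ω | ∀ i, i ≠ Fin.last n → r (Y i ω) (Y (Fin.last n) ω)} ≤ ((n : ℝ≥0∞) + 1)⁻¹ := by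
  set S : Fin (n + 1) → Set (Fin (n + 1) → ℝ) :=
    fun j => {f | ∀ i, i ≠ j → r (f i) (f j)} with hS
  have hSmeas : ∀ j, MeasurableSet (S j) := by
    intro j
    have : S j = ⋂ i, ⋂ (_ : i ≠ j), {f : Fin (n+1) → ℝ | r (f i) (f j)} := by
      ext f; simp [hS]
    rw [this]
    refine MeasurableSet.iInter fun i => MeasurableSet.iInter fun _ => ?_
    have : {f : Fin (n+1) → ℝ | r (f i) (f j)}
        = (fun f : Fin (n+1) → ℝ => (f i, f j)) ⁻¹' {p : ℝ × ℝ | r p.1 p.2} := rfl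
    rw [this]
    exact hmr.preimage ((measurable_pi_apply i).prodMk (measurable_pi_apply j))
  set Yvec : Ω → Fin (n + 1) → ℝ := fun ω i => Y i ω with hYvec
  have hYvecm : Measurable Yvec := measurable_pi_lambda _ hmeas
  set E : Fin (n + 1) → Set Ω := fun j => Yvec ⁻¹' S j with hE
  have hEmeas : ∀ j, MeasurableSet (E j) := fun j => (hSmeas j).preimage hYvecm
  have hEq : ∀ j, μ (E j) = μ (E (Fin.last n)) := by
    intro j
    set σ : Equiv.Perm (Fin (n + 1)) := Equiv.swap j (Fin.last n) with hσ
    have h1 : Measure.map Yvec μ (S j) = μ (E j) := by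
      rw [Measure.map_apply hYvecm (hSmeas j)]
    have h2 : Measure.map (fun ω => fun i => Y (σ i) ω) μ (S j) = μ (E (Fin.last n)) := by
      rw [Measure.map_apply (measurable_pi_lambda _ fun i => hmeas (σ i)) (hSmeas j)]
      congr 1
      ext ω
      simp only [Set.mem_preimage, hE, hS, Set.mem_setOf_eq, hYvec]
      constructor
      · intro h k hk
        have := h (σ k) (by
          intro hc
          apply hk
          have : σ (σ k) = σ j := by rw [hc]
          simpa [hσ, Equiv.swap_apply_right] using this)
        simpa [hσ, Equiv.swap_apply_self, Equiv.swap_apply_left] using this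
      · intro h i hi
        have hσi : σ i ≠ Fin.last n := by
          intro hc
          apply hi
          have : σ (σ i) = σ (Fin.last n) := by rw [hc]
          simpa [hσ, Equiv.swap_apply_self, Equiv.swap_apply_right] using this
        have := h (σ i) hσi
        simpa [hσ, Equiv.swap_apply_left] using this
    rw [← h1, ← hexch σ, h2]
  have hdisj : Pairwise (Function.onFun Disjoint E) := by
    intro j k hjk
    refine Set.disjoint_left.2 fun ω hj hk => ?_
    exact hasym _ _ (hj k hjk.symm) (hk j hjk)
  have hsum : ∑ j : Fin (n + 1), μ (E j) ≤ 1 := by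
    rw [← tsum_fintype (L := SummationFilter.unconditional _), ← measure_iUnion hdisj hEmeas]
    exact prob_le_one
  have : (n + 1 : ℝ≥0∞) * μ (E (Fin.last n)) ≤ 1 := by
    calc (n + 1 : ℝ≥0∞) * μ (E (Fin.last n))
        = ∑ _j : Fin (n + 1), μ (E (Fin.last n)) := by
          simp [Finset.sum_const, nsmul_eq_mul]
      _ = ∑ j : Fin (n + 1), μ (E j) := by
          exact Finset.sum_congr rfl fun j _ => (hEq j).symm
      _ ≤ 1 := hsum
  have hlast : E (Fin.last n) = {ω | ∀ i, i ≠ Fin.last n → r (Y i ω) (Y (Fin.last n) ω)} := rfl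
  rw [← hlast]
  rw [ENNReal.le_inv_iff_mul_le]
  rwa [mul_comm] at this

theorem exchangeable_range_coverage {Ω : Type*} [MeasurableSpace Ω] (μ : Measure Ω)
    [IsProbabilityMeasure μ] {n : ℕ} (hn : 0 < n) (Y : Fin (n + 1) → Ω → ℝ)
    (hmeas : ∀ i, Measurable (Y i))
    (hexch : ∀ σ : Equiv.Perm (Fin (n + 1)),
      Measure.map (fun ω => fun i => Y (σ i) ω) μ = Measure.map (fun ω => fun i => Y i ω) μ) :
    μ {ω | ∀ i : Fin n, Y i.castSucc ω < Y (Fin.last n) ω} ≤ ((n : ℝ≥0∞) + 1)⁻¹ ∧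
    μ {ω | ∀ i : Fin n, Y (Fin.last n) ω < Y i.castSucc ω} ≤ ((n : ℝ≥0∞) + 1)⁻¹ ∧
    1 - 2 * ((n : ℝ≥0∞) + 1)⁻¹ ≤
      μ {ω | (∃ i : Fin n, Y i.castSucc ω ≤ Y (Fin.last n) ω) ∧
             (∃ i : Fin n, Y (Fin.last n) ω ≤ Y i.castSucc ω)} := by
  have hset1 : {ω | ∀ i : Fin n, Y i.castSucc ω < Y (Fin.last n) ω}
      = {ω | ∀ i, i ≠ Fin.last n → Y i ω < Y (Fin.last n) ω} := by
    ext ω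
    simp only [Set.mem_setOf_eq]
    constructor
    · intro h i hi
      obtain ⟨j, rfl⟩ := Fin.exists_castSucc_eq.2 hi
      exact h j
    · intro h i
      exact h i.castSucc (Fin.castSucc_lt_last i).ne
  have hset2 : {ω | ∀ i : Fin n, Y (Fin.last n) ω < Y i.castSucc ω}
      = {ω | ∀ i, i ≠ Fin.last n → Y (Fin.last n) ω < Y i ω} := by
    ext ω
    simp only [Set.mem_setOf_eq]
    constructor
    · intro h i hi
      obtain ⟨j, rfl⟩ := Fin.exists_castSucc_eq.2 hi
      exact h j
    · intro h i
      exact h i.castSucc (Fin.castSucc_lt_last i).ne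
  have hlt : MeasurableSet {p : ℝ × ℝ | p.1 < p.2} := measurableSet_lt measurable_fst measurable_snd
  have hgt : MeasurableSet {p : ℝ × ℝ | p.2 < p.1} := measurableSet_lt measurable_snd measurable_fst
  have h1 : μ {ω | ∀ i : Fin n, Y i.castSucc ω < Y (Fin.last n) ω} ≤ ((n : ℝ≥0∞) + 1)⁻¹ := by
    rw [hset1]
    exact aux_strict μ Y hmeas hexch (· < ·) (fun a b => lt_asymm) hlt
  have h2 : μ {ω | ∀ i : Fin n, Y (Fin.last n) ω < Y i.castSucc ω} ≤ ((n : ℝ≥0∞) + 1)⁻¹ := by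
    rw [hset2]
    exact aux_strict μ Y hmeas hexch (fun a b => b < a) (fun a b => lt_asymm) hgt
  refine ⟨h1, h2, ?_⟩
  set C : Set Ω := {ω | (∃ i : Fin n, Y i.castSucc ω ≤ Y (Fin.last n) ω) ∧
             (∃ i : Fin n, Y (Fin.last n) ω ≤ Y i.castSucc ω)} with hC
  have hCm : MeasurableSet C := by
    have : C = (⋃ i : Fin n, {ω | Y i.castSucc ω ≤ Y (Fin.last n) ω})
        ∩ (⋃ i : Fin n, {ω | Y (Fin.last n) ω ≤ Y i.castSucc ω}) := by
      ext ω; simp [hC]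
    rw [this]
    exact (MeasurableSet.iUnion fun i => measurableSet_le (hmeas _) (hmeas _)).inter
      (MeasurableSet.iUnion fun i => measurableSet_le (hmeas _) (hmeas _))
  have hcompl : Cᶜ ⊆ {ω | ∀ i : Fin n, Y i.castSucc ω < Y (Fin.last n) ω}
      ∪ {ω | ∀ i : Fin n, Y (Fin.last n) ω < Y i.castSucc ω} := by
    intro ω hω
    simp only [hC, Set.mem_compl_iff, Set.mem_setOf_eq, not_and_or, not_exists, not_le] at hω
    rcases hω with h | h
    · right; exact h
    · left; exact h
  have hμcompl : μ Cᶜ ≤ 2 * ((n : ℝ≥0∞) + 1)⁻¹ := by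
    calc μ Cᶜ ≤ μ ({ω | ∀ i : Fin n, Y i.castSucc ω < Y (Fin.last n) ω}
        ∪ {ω | ∀ i : Fin n, Y (Fin.last n) ω < Y i.castSucc ω}) := measure_mono hcompl
      _ ≤ μ {ω | ∀ i : Fin n, Y i.castSucc ω < Y (Fin.last n) ω}
          + μ {ω | ∀ i : Fin n, Y (Fin.last n) ω < Y i.castSucc ω} := measure_union_le _ _
      _ ≤ ((n : ℝ≥0∞) + 1)⁻¹ + ((n : ℝ≥0∞) + 1)⁻¹ := add_le_add h1 h2
      _ = 2 * ((n : ℝ≥0∞) + 1)⁻¹ := (two_mul _).symm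
  have : μ C = 1 - μ Cᶜ := by
    rw [← prob_compl_eq_one_sub hCm.compl, compl_compl]
  rw [this]
  exact tsub_le_tsub_left hμcompl 1
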